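/- Let $\phi^{N,k}(x,z) = \sum_{d=0}^{\infty} e^{dx} \frac{(kd)!}{(d!)^N} \prod_{j=1}^{kd}(1+\frac{k}{j}z) \prod_{j=1}^{d}(1+\frac{1}{j}z)^{-N}$ and $\Phi^{N,k}(x,z) = e^{zx}\phi^{N,k}(x,z)$. Then $\Phi^{N,k}$ satisfies $\left((\partial_x)^{N-1} - k e^x (k\partial_x + k-1)(k\partial_x + k-2)\cdots(k\partial_x + 1)\right)\Phi^{N,k}(x,z) = z^{N-1} e^{zx}$ as an identity of formal power series in $e^x$ with coefficients rational functions in $z$. -/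

import Mathlib

open scoped BigOperators

/-- The coefficient `φ_d^{N,k}(z)` of `e^{dx}` in `φ^{N,k}(x,z)`, as a rational function in `z`:
`φ_d = (kd)!/(d!)^N ⬝ ∏_{j=1}^{kd}(1 + (k/j)z) ⬝ ∏_{j=1}^{d}(1 + z/j)^{-N}`. -/
noncomputable def phiCoeff (N k d : ℕ) : RatFunc ℚ :=
  (((k * d).factorial : RatFunc ℚ) / ((d.factorial : RatFunc ℚ)) ^ N) *
    (∏ j ∈ Finset.Icc 1 (k * d), (1 + ((k : RatFunc ℚ) / (j : RatFunc ℚ)) * RatFunc.X)) *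
    ((∏ j ∈ Finset.Icc 1 d, (1 + RatFunc.X / (j : RatFunc ℚ))) ^ N)⁻¹

instance : CharZero (RatFunc ℚ) :=
  charZero_of_injective_algebraMap (algebraMap ℚ (RatFunc ℚ)).injective

open Polynomial in
private lemma aux_ne (j : ℕ) : ((j : RatFunc ℚ) + RatFunc.X) ≠ 0 := by
  have h : ((j : RatFunc ℚ) + RatFunc.X)
      = algebraMap (ℚ[X]) (RatFunc ℚ) ((j : ℚ[X]) + Polynomial.X) := by
    push_cast [← RatFunc.algebraMap_X]; ring
  rw [h]
  intro h2
  have h3 : ((j : ℚ[X]) + Polynomial.X) = 0 := by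
    apply RatFunc.algebraMap_injective ℚ
    simpa using h2
  have := congrArg (fun p => Polynomial.coeff p 1) h3
  simp at this

private lemma factor_ne (j : ℕ) (hj : 1 ≤ j) : (1 + RatFunc.X / (j : RatFunc ℚ)) ≠ 0 := by
  have hj0 : (j : RatFunc ℚ) ≠ 0 := Nat.cast_ne_zero.mpr (by omega)
  have h : (1 + RatFunc.X / (j : RatFunc ℚ)) = ((j : RatFunc ℚ) + RatFunc.X) / (j : RatFunc ℚ) := by
    rw [add_div, div_self hj0]
  rw [h]
  exact div_ne_zero (aux_ne j) hj0

private lemma Q_ne (d : ℕ) :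
    (∏ j ∈ Finset.Icc 1 d, (1 + RatFunc.X / (j : RatFunc ℚ))) ≠ 0 := by
  apply Finset.prod_ne_zero_iff.mpr
  intro j hj
  exact factor_ne j (Finset.mem_Icc.mp hj).1

private lemma fact_mul_prod (a b : ℕ) :
    (a + b).factorial = a.factorial * ∏ j ∈ Finset.Ioc a (a + b), j := by
  induction b with
  | zero => simp
  | succ n ih =>
    rw [show a + (n+1) = (a+n)+1 from rfl, Finset.prod_Ioc_succ_top (by omega),
      Nat.factorial_succ, ih]; ring

private lemma step (N k d : ℕ) :
    (((d : RatFunc ℚ) + 1) + RatFunc.X) ^ N * phiCoeff N k (d + 1) =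
      (∏ j ∈ Finset.Ioc (k * d) (k * d + k),
        ((j : RatFunc ℚ) + (k : RatFunc ℚ) * RatFunc.X)) * phiCoeff N k d := by
  have hd1 : ((d : RatFunc ℚ) + 1) ≠ 0 := by
    rw [show ((d : RatFunc ℚ) + 1) = ((d+1 : ℕ) : RatFunc ℚ) by push_cast; ring]
    exact Nat.cast_ne_zero.mpr (Nat.succ_ne_zero d)
  have htne : (1 + RatFunc.X / ((d : RatFunc ℚ) + 1)) ≠ 0 := by
    rw [show ((d : RatFunc ℚ) + 1) = ((d+1 : ℕ) : RatFunc ℚ) by push_cast; ring]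
    exact factor_ne (d+1) (by omega)
  have hfac : ((d.factorial : RatFunc ℚ)) ≠ 0 :=
    Nat.cast_ne_zero.mpr d.factorial_ne_zero
  have h1 : (((k * (d+1)).factorial : ℕ) : RatFunc ℚ) =
      ((k*d).factorial : RatFunc ℚ) * ∏ j ∈ Finset.Ioc (k*d) (k*d+k), (j : RatFunc ℚ) := by
    rw [show k * (d+1) = k*d + k by ring, fact_mul_prod]
    push_cast
    ring
  have h2 : (((d+1).factorial : ℕ) : RatFunc ℚ) =
      (d.factorial : RatFunc ℚ) * ((d : RatFunc ℚ) + 1) := by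
    rw [Nat.factorial_succ]; push_cast; ring
  have h3 : (∏ j ∈ Finset.Icc 1 (k*(d+1)),
        (1 + ((k : RatFunc ℚ) / (j : RatFunc ℚ)) * RatFunc.X)) =
      (∏ j ∈ Finset.Icc 1 (k*d), (1 + ((k : RatFunc ℚ) / (j : RatFunc ℚ)) * RatFunc.X)) *
      ∏ j ∈ Finset.Ioc (k*d) (k*d+k), (1 + ((k : RatFunc ℚ) / (j : RatFunc ℚ)) * RatFunc.X) := by
    rw [show k * (d+1) = k*d + k by ring,
      show Finset.Icc 1 (k*d+k) = Finset.Ioc 0 (k*d+k) from Finset.Icc_add_one_left_eq_Ioc 0 _,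
      show Finset.Icc 1 (k*d) = Finset.Ioc 0 (k*d) from Finset.Icc_add_one_left_eq_Ioc 0 _,
      Finset.prod_Ioc_consecutive _ (Nat.zero_le _) (Nat.le_add_right _ _)]
  have h4 : (∏ j ∈ Finset.Icc 1 (d+1), (1 + RatFunc.X / (j : RatFunc ℚ))) =
      (∏ j ∈ Finset.Icc 1 d, (1 + RatFunc.X / (j : RatFunc ℚ))) *
        (1 + RatFunc.X / ((d : RatFunc ℚ) + 1)) := by
    rw [Finset.prod_Icc_succ_top (by omega)]
    push_cast
    ring
  have h5 : (∏ j ∈ Finset.Ioc (k*d) (k*d+k), (j : RatFunc ℚ)) *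
      (∏ j ∈ Finset.Ioc (k*d) (k*d+k), (1 + ((k : RatFunc ℚ) / (j : RatFunc ℚ)) * RatFunc.X)) =
      ∏ j ∈ Finset.Ioc (k*d) (k*d+k), ((j : RatFunc ℚ) + (k : RatFunc ℚ) * RatFunc.X) := by
    rw [← Finset.prod_mul_distrib]
    apply Finset.prod_congr rfl
    intro j hj
    have hj1 : 1 ≤ j := by have := (Finset.mem_Ioc.mp hj).1; omega
    have hj0 : (j : RatFunc ℚ) ≠ 0 := Nat.cast_ne_zero.mpr (by omega)
    field_simp
  have hat : ((d : RatFunc ℚ) + 1) * (1 + RatFunc.X / ((d : RatFunc ℚ) + 1)) =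
      ((d : RatFunc ℚ) + 1 + RatFunc.X) := by
    field_simp
  rw [phiCoeff, phiCoeff, h1, h2, h3, h4, ← h5, ← hat]
  have hQ := Q_ne d
  rw [mul_pow ((d : RatFunc ℚ) + 1), mul_pow (d.factorial : RatFunc ℚ), mul_pow
    (∏ j ∈ Finset.Icc 1 d, (1 + RatFunc.X / (j : RatFunc ℚ))), mul_inv]
  have e1 : ((d : RatFunc ℚ) + 1) ^ N ≠ 0 := pow_ne_zero _ hd1
  have e2 : (1 + RatFunc.X / ((d : RatFunc ℚ) + 1)) ^ N ≠ 0 := pow_ne_zero _ htne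
  have e3 : (∏ j ∈ Finset.Icc 1 d, (1 + RatFunc.X / (j : RatFunc ℚ))) ^ N ≠ 0 :=
    pow_ne_zero _ hQ
  have e4 : (d.factorial : RatFunc ℚ) ^ N ≠ 0 := pow_ne_zero _ hfac
  have hD : ((d : RatFunc ℚ) + 1 + RatFunc.X) ≠ 0 := by
    intro h; apply aux_ne (d+1); push_cast; linear_combination h
  field_simp
/-- `Φ^{N,k}(x,z) = e^{zx} φ^{N,k}(x,z)` satisfies
`((∂ₓ)^{N-1} - k eˣ (k∂ₓ+k-1)⋯(k∂ₓ+1)) Φ = z^{N-1} e^{zx}`, as an identity of formal power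
series in `q = eˣ` with coefficients rational functions in `z`; since `∂ₓ` acts on
`e^{(d+z)x}` by multiplication by `d + z`, this says coefficientwise:
`(0+z)^{N-1} φ₀ = z^{N-1}` and, for every `d`,
`(d+1+z)^{N-1} φ_{d+1} = k ∏_{m=1}^{k-1}(k(d+z)+m) ⬝ φ_d`. -/
theorem stmt_0 (N k : ℕ) (hN : 1 ≤ N) (hk : 1 ≤ k) :
    (((0 : RatFunc ℚ) + RatFunc.X) ^ (N - 1) * phiCoeff N k 0 = RatFunc.X ^ (N - 1)) ∧
    ∀ d : ℕ,
      (((d : RatFunc ℚ) + 1) + RatFunc.X) ^ (N - 1) * phiCoeff N k (d + 1) =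
        (k : RatFunc ℚ) *
          (∏ m ∈ Finset.Icc 1 (k - 1),
            ((k : RatFunc ℚ) * ((d : RatFunc ℚ) + RatFunc.X) + (m : RatFunc ℚ))) *
          phiCoeff N k d := by
  constructor
  · simp [phiCoeff]
  · intro d
    have hD : ((d : RatFunc ℚ) + 1 + RatFunc.X) ≠ 0 := by
      intro h; apply aux_ne (d+1); push_cast; linear_combination h
    obtain ⟨n, rfl⟩ : ∃ n, N = n + 1 := ⟨N - 1, by omega⟩
    obtain ⟨e, rfl⟩ : ∃ e, k = e + 1 := ⟨k - 1, by omega⟩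
    have hbig : (∏ j ∈ Finset.Ioc ((e+1) * d) ((e+1) * d + (e+1)),
        ((j : RatFunc ℚ) + ((e+1 : ℕ) : RatFunc ℚ) * RatFunc.X)) =
        ((e+1 : ℕ) : RatFunc ℚ) * (∏ m ∈ Finset.Icc 1 e,
          (((e+1 : ℕ) : RatFunc ℚ) * ((d : RatFunc ℚ) + RatFunc.X) + (m : RatFunc ℚ))) *
        ((d : RatFunc ℚ) + 1 + RatFunc.X) := by
      rw [show Finset.Ioc ((e+1)*d) ((e+1)*d+(e+1))
            = Finset.Ioc ((e+1)*d+0) ((e+1)*d+(e+1)) by norm_num,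
        ← Finset.map_add_left_Ioc, Finset.prod_map]
      simp only [addLeftEmbedding_apply]
      rw [show Finset.Ioc 0 (e+1) = Finset.Icc 1 (e+1) from (Finset.Icc_add_one_left_eq_Ioc 0 _).symm,
        Finset.prod_Icc_succ_top (by omega)]
      have hc : ∀ m ∈ Finset.Icc 1 e,
          (((e+1)*d+m : ℕ) : RatFunc ℚ) + ((e+1 : ℕ) : RatFunc ℚ) * RatFunc.X
          = ((e+1 : ℕ) : RatFunc ℚ) * ((d : RatFunc ℚ) + RatFunc.X) + (m : RatFunc ℚ) := by
        intro m hm; push_cast; ring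
      rw [Finset.prod_congr rfl hc]
      push_cast
      ring
    have hs := step (n+1) (e+1) d
    rw [hbig, pow_succ] at hs
    simp only [Nat.add_sub_cancel]
    apply mul_left_cancel₀ hD
    push_cast at hs ⊢
    linear_combination hs
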